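/- dω = 0 (the structure (J,⟨·,·⟩) is almost Kähler, class W₂) if and only if v₀ = 0 and Dᵗ∘J' + J'∘D = 0 (i.e. D ∈ sp(n−1,ℝ)). -/

import Mathlib

open scoped BigOperators
open Matrix

noncomputable section

/-- The underlying `2n`-dimensional real vector space `ℝ^{2n}`, whose standard basis
plays the role of the orthonormal basis `e₀, e₁, …, e_{2n-1}`. -/
abbrev G (n : ℕ) := Fin (2*n) → ℝ

/-- The inner product `⟨·,·⟩` making the standard basis orthonormal. -/
def inn {n : ℕ} (x y : G n) : ℝ := ∑ i, x i * y i

/-- The standard basis vector `e k` (indexed by a natural number `k`). -/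
def E (n : ℕ) (k : ℕ) : G n := fun i => if (i : ℕ) = k then 1 else 0

/-- Membership in `a = span{e₂, …, e_{2n-1}}`. -/
def inA {n : ℕ} (x : G n) : Prop := ∀ i : Fin (2*n), (i : ℕ) < 2 → x i = 0

/-- The orthogonal almost complex structure `J e_{2i} = e_{2i+1}`, `J e_{2i+1} = -e_{2i}`. -/
def Jm (n : ℕ) : Matrix (Fin (2*n)) (Fin (2*n)) ℝ :=
  Matrix.of fun k l =>
    if (k : ℕ) = (l : ℕ) + 1 ∧ Even (l : ℕ) then (1 : ℝ)
    else if (l : ℕ) = (k : ℕ) + 1 ∧ Even (k : ℕ) then -1 else 0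

/-- `D` is (the extension by zero of) an endomorphism of `a`: it vanishes on
`span{e₀, e₁}` and takes values orthogonal to `span{e₀, e₁}`. -/
def DinA {n : ℕ} (D : Matrix (Fin (2*n)) (Fin (2*n)) ℝ) : Prop :=
  ∀ k l : Fin (2*n), ((k : ℕ) < 2 ∨ (l : ℕ) < 2) → D k l = 0

/-- The matrix of `L` determined by the data `μ, v₀, w₀, D`, i.e.
`L e₀ = 0`, `L e₁ = μ e₁ + v₀` and `L x = ⟨w₀, x⟩ e₁ + D x` for `x ∈ a`
(for `v₀, w₀ ∈ a` and `D` an endomorphism of `a`). -/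
def Lm {n : ℕ} (μ : ℝ) (v₀ w₀ : G n) (D : Matrix (Fin (2*n)) (Fin (2*n)) ℝ) :
    Matrix (Fin (2*n)) (Fin (2*n)) ℝ :=
  Matrix.of fun k l =>
    (if (k : ℕ) = 1 ∧ (l : ℕ) = 1 then μ else 0)
      + (if (l : ℕ) = 1 then v₀ k else 0)
      + (if (k : ℕ) = 1 then w₀ l else 0)
      + D k l

/-- The Lie bracket of the almost abelian Lie algebra `g = ℝ e₀ ⋉_L u`:
`[e₀, u] = L u` for `u ∈ u = span{e₁, …, e_{2n-1}}` and `[u, v] = 0` for `u, v ∈ u`. -/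
def br {n : ℕ} (L : Matrix (Fin (2*n)) (Fin (2*n)) ℝ) (x y : G n) : G n :=
  inn x (E n 0) • L.mulVec y - inn y (E n 0) • L.mulVec x

/-- `nabla` is the Levi-Civita connection of `⟨·,·⟩`, i.e. it satisfies the Koszul
formula `2⟨∇_x y, z⟩ = ⟨[x,y],z⟩ − ⟨[y,z],x⟩ + ⟨[z,x],y⟩`. -/
def Koszul {n : ℕ} (L : Matrix (Fin (2*n)) (Fin (2*n)) ℝ) (nabla : G n → G n → G n) : Prop :=
  ∀ x y z : G n, 2 * inn (nabla x y) z
    = inn (br L x y) z - inn (br L y z) x + inn (br L z x) y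

/-- `(∇_y J)(x) = ∇_y (Jx) − J ∇_y x`. -/
def covJ {n : ℕ} (nabla : G n → G n → G n) (y x : G n) : G n :=
  nabla y ((Jm n).mulVec x) - (Jm n).mulVec (nabla y x)

/-- The rough Laplacian
`(∇*∇J)(x) = Σ_i ((∇_{e_i}(∇_{e_i}J))(x) − (∇_{∇_{e_i}e_i} J)(x))`. -/
def roughLap {n : ℕ} (nabla : G n → G n → G n) (x : G n) : G n :=
  ∑ i : Fin (2*n),
    (nabla (E n i.val) (covJ nabla (E n i.val) x)
      - covJ nabla (E n i.val) (nabla (E n i.val) x)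
      - covJ nabla (nabla (E n i.val) (E n i.val)) x)

/-- `J` is harmonic: `J ∘ (∇*∇J) = (∇*∇J) ∘ J`. -/
def Harmonic {n : ℕ} (nabla : G n → G n → G n) : Prop :=
  ∀ x : G n, (Jm n).mulVec (roughLap nabla x) = roughLap nabla ((Jm n).mulVec x)

/-- Symmetric part of a matrix. -/
def symPart {n : ℕ} (M : Matrix (Fin (2*n)) (Fin (2*n)) ℝ) :
    Matrix (Fin (2*n)) (Fin (2*n)) ℝ := (1/2 : ℝ) • (M + Mᵀ)

/-- Skew-symmetric part of a matrix. -/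
def skewPart {n : ℕ} (M : Matrix (Fin (2*n)) (Fin (2*n)) ℝ) :
    Matrix (Fin (2*n)) (Fin (2*n)) ℝ := (1/2 : ℝ) • (M - Mᵀ)

/-- `γ = (v₀ + w₀)/2`. -/
def gam {n : ℕ} (v₀ w₀ : G n) : G n := (1/2 : ℝ) • (v₀ + w₀)

/-- `ρ = (v₀ − w₀)/2`. -/
def rho {n : ℕ} (v₀ w₀ : G n) : G n := (1/2 : ℝ) • (v₀ - w₀)

/-- The fundamental 2-form `ω(x,y) = ⟨Jx, y⟩`. -/
def om {n : ℕ} (x y : G n) : ℝ := inn ((Jm n).mulVec x) y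

/-- `(∇_x ω)(y,z) = −ω(∇_x y, z) − ω(y, ∇_x z)`. -/
def nablaOm {n : ℕ} (nabla : G n → G n → G n) (x y z : G n) : ℝ :=
  - om (nabla x y) z - om y (nabla x z)

/-- `dω(x,y,z) = −ω([x,y],z) − ω([y,z],x) − ω([z,x],y)`. -/
def dOm {n : ℕ} (L : Matrix (Fin (2*n)) (Fin (2*n)) ℝ) (x y z : G n) : ℝ :=
  - om (br L x y) z - om (br L y z) x - om (br L z x) y

/-- The codifferential `δω(x) = −Σ_i (∇_{e_i}ω)(e_i, x)`. -/
def deltaOm {n : ℕ} (nabla : G n → G n → G n) (x : G n) : ℝ :=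
  - ∑ i : Fin (2*n), nablaOm nabla (E n i.val) (E n i.val) x

/-- The Nijenhuis tensor `N(x,y) = [x,y] + J([Jx,y] + [x,Jy]) − [Jx,Jy]`. -/
def Nij {n : ℕ} (L : Matrix (Fin (2*n)) (Fin (2*n)) ℝ) (x y : G n) : G n :=
  br L x y
    + (Jm n).mulVec (br L ((Jm n).mulVec x) y + br L x ((Jm n).mulVec y))
    - br L ((Jm n).mulVec x) ((Jm n).mulVec y)

/-- `T⁻(x,y,z) = (∇_x ω)(y,z) − (∇_{Jx} ω)(Jy,z)`. -/
def Tminus {n : ℕ} (nabla : G n → G n → G n) (x y z : G n) : ℝ :=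
  nablaOm nabla x y z - nablaOm nabla ((Jm n).mulVec x) ((Jm n).mulVec y) z

/-- `T⁺(x,y,z) = (∇_x ω)(y,z) + (∇_{Jx} ω)(Jy,z)`. -/
def Tplus {n : ℕ} (nabla : G n → G n → G n) (x y z : G n) : ℝ :=
  nablaOm nabla x y z + nablaOm nabla ((Jm n).mulVec x) ((Jm n).mulVec y) z

/-- `U(x,y,z) = ⟨x,y⟩δω(z) − ⟨x,z⟩δω(y) − ⟨x,Jy⟩δω(Jz) + ⟨x,Jz⟩δω(Jy)`. -/
def Uten {n : ℕ} (nabla : G n → G n → G n) (x y z : G n) : ℝ :=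
  inn x y * deltaOm nabla z - inn x z * deltaOm nabla y
    - inn x ((Jm n).mulVec y) * deltaOm nabla ((Jm n).mulVec z)
    + inn x ((Jm n).mulVec z) * deltaOm nabla ((Jm n).mulVec y)

/-- The Lee form `θ(x) = −(1/(n−1)) δω(Jx)`. -/
def Lee {n : ℕ} (nabla : G n → G n → G n) (x : G n) : ℝ :=
  -(1/((n : ℝ) - 1)) * deltaOm nabla ((Jm n).mulVec x)

/-- The identity of `a`, extended by zero to `g`. -/
def Ia (n : ℕ) : Matrix (Fin (2*n)) (Fin (2*n)) ℝ :=
  Matrix.of fun k l => if k = l ∧ 2 ≤ (k : ℕ) then (1 : ℝ) else 0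


section Aux
variable {n : ℕ}

lemma fin_sum_single {m : ℕ} (f : Fin m → ℝ) (j : Fin m) (h : ∀ b, b ≠ j → f b = 0) :
    ∑ i, f i = f j :=
  Finset.sum_eq_single j (fun b _ hb => h b hb) (fun hj => absurd (Finset.mem_univ j) hj)

lemma dot_E (x : G n) (k : Fin (2*n)) : x ⬝ᵥ E n (k:ℕ) = x k := by
  show ∑ i, x i * (if (i:ℕ) = (k:ℕ) then (1:ℝ) else 0) = x k
  rw [fin_sum_single _ k (fun b hb => ?_), if_pos rfl, mul_one]
  rw [if_neg (fun hc => hb (Fin.ext hc)), mul_zero]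

lemma mulVec_E (A : Matrix (Fin (2*n)) (Fin (2*n)) ℝ) (k : Fin (2*n)) :
    A *ᵥ E n (k:ℕ) = fun i => A i k := by
  funext i
  show ∑ j, A i j * (if (j:ℕ) = (k:ℕ) then (1:ℝ) else 0) = A i k
  rw [fin_sum_single _ k (fun b hb => ?_), if_pos rfl, mul_one]
  rw [if_neg (fun hc => hb (Fin.ext hc)), mul_zero]

lemma Jm_apply (k l : Fin (2*n)) :
    Jm n k l = if (k:ℕ) = (l:ℕ) + 1 ∧ Even (l:ℕ) then (1:ℝ)
      else if (l:ℕ) = (k:ℕ) + 1 ∧ Even (k:ℕ) then -1 else 0 := rfl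

lemma J_row_even (w : G n) (k j : Fin (2*n)) (hk : Even (k:ℕ)) (hj : (j:ℕ) = (k:ℕ) + 1) :
    ∑ m, Jm n k m * w m = -(w j) := by
  rw [Nat.even_iff] at hk
  rw [fin_sum_single _ j (fun b hb => ?_)]
  · have c1 : ¬ ((k:ℕ) = (j:ℕ) + 1 ∧ Even (j:ℕ)) := by
      rintro ⟨h1, -⟩; omega
    have c2 : (j:ℕ) = (k:ℕ) + 1 ∧ Even (k:ℕ) := ⟨hj, by rw [Nat.even_iff]; omega⟩
    rw [Jm_apply, if_neg c1, if_pos c2]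
    ring
  · have hb' : (b:ℕ) ≠ (j:ℕ) := fun hc => hb (Fin.ext hc)
    have c1 : ¬ ((k:ℕ) = (b:ℕ) + 1 ∧ Even (b:ℕ)) := by
      rintro ⟨h1, h2⟩; rw [Nat.even_iff] at h2; omega
    have c2 : ¬ ((b:ℕ) = (k:ℕ) + 1 ∧ Even (k:ℕ)) := by
      rintro ⟨h1, -⟩; omega
    rw [Jm_apply, if_neg c1, if_neg c2, zero_mul]

lemma J_row_odd (w : G n) (k j : Fin (2*n)) (hk : ¬ Even (k:ℕ)) (hj : (j:ℕ) + 1 = (k:ℕ)) :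
    ∑ m, Jm n k m * w m = w j := by
  rw [Nat.even_iff] at hk
  rw [fin_sum_single _ j (fun b hb => ?_)]
  · have c1 : (k:ℕ) = (j:ℕ) + 1 ∧ Even (j:ℕ) := ⟨hj.symm, by rw [Nat.even_iff]; omega⟩
    rw [Jm_apply, if_pos c1, one_mul]
  · have hb' : (b:ℕ) ≠ (j:ℕ) := fun hc => hb (Fin.ext hc)
    have c1 : ¬ ((k:ℕ) = (b:ℕ) + 1 ∧ Even (b:ℕ)) := by
      rintro ⟨h1, -⟩; omega
    have c2 : ¬ ((b:ℕ) = (k:ℕ) + 1 ∧ Even (k:ℕ)) := by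
      rintro ⟨-, h2⟩; rw [Nat.even_iff] at h2; omega
    rw [Jm_apply, if_neg c1, if_neg c2, zero_mul]

lemma Jm_skew (k l : Fin (2*n)) : Jm n k l = -(Jm n l k) := by
  rw [Jm_apply, Jm_apply]
  by_cases h1 : (k:ℕ) = (l:ℕ) + 1 ∧ Even (l:ℕ)
  · have c : ¬ ((l:ℕ) = (k:ℕ) + 1 ∧ Even (k:ℕ)) := by
      rintro ⟨h, -⟩; have := h1.1; omega
    rw [if_pos h1, if_neg c, if_pos h1]
    norm_num
  · by_cases h2 : (l:ℕ) = (k:ℕ) + 1 ∧ Even (k:ℕ)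
    · rw [if_neg h1, if_pos h2, if_pos h2]
    · rw [if_neg h1, if_neg h2, if_neg h2, if_neg h1]
      norm_num

end Aux

/-- `dω = 0` (almost Kähler, class `W₂`) iff `v₀ = 0` and
`Dᵗ J' + J' D = 0` (i.e. `D ∈ sp(n-1,ℝ)`). -/
theorem statement7 (n : ℕ) (hn : 2 ≤ n) (μ : ℝ) (v₀ w₀ : G n) (hv : inA v₀) (hw : inA w₀)
    (D : Matrix (Fin (2*n)) (Fin (2*n)) ℝ) (hD : DinA D) :
    (∀ x y z : G n, dOm (Lm μ v₀ w₀ D) x y z = 0)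
      ↔ (v₀ = 0
          ∧ (∀ x : G n, inA x →
              Dᵀ.mulVec ((Jm n).mulVec x) + (Jm n).mulVec (D.mulVec x) = 0)) := by
  have h2n : 0 < 2*n := by omega
  have h2n1 : 1 < 2*n := by omega
  set L := Lm μ v₀ w₀ D with hLdef
  set N := Jm n * L with hNdef
  set Qm := Dᵀ * Jm n + Jm n * D with hQdef
  set k0 : Fin (2*n) := ⟨0, h2n⟩ with hk0def
  set k1 : Fin (2*n) := ⟨1, h2n1⟩ with hk1def
  have k0v : (k0:ℕ) = 0 := rfl
  have k1v : (k1:ℕ) = 1 := rfl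
  have hLap : ∀ k l : Fin (2*n), L k l =
      (if (k:ℕ) = 1 ∧ (l:ℕ) = 1 then μ else 0)
      + (if (l:ℕ) = 1 then v₀ k else 0)
      + (if (k:ℕ) = 1 then w₀ l else 0) + D k l := fun k l => rfl
  have hNap : ∀ k l : Fin (2*n), N k l = ∑ m, Jm n k m * L m l := by
    intro k l; rw [hNdef]; exact Matrix.mul_apply
  have hv0' : v₀ k0 = 0 := hv k0 (by omega)
  have hv1' : v₀ k1 = 0 := hv k1 (by omega)
  have hw0' : w₀ k0 = 0 := hw k0 (by omega)
  have hw1' : w₀ k1 = 0 := hw k1 (by omega)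
  -- column 0 of L vanishes
  have hLc0 : ∀ m l : Fin (2*n), (l:ℕ) = 0 → L m l = 0 := by
    intro m l hl
    have hD0 : D m l = 0 := hD m l (Or.inr (by omega))
    rw [hLap]
    have h1 : ¬ ((l:ℕ) = 1) := by omega
    by_cases hm : (m:ℕ) = 1 <;> simp [hm, h1, hD0]
    · exact hw l (by omega)
  -- row 0 of L vanishes
  have hLr0 : ∀ l : Fin (2*n), L k0 l = 0 := by
    intro l
    have hD0 : D k0 l = 0 := hD k0 l (Or.inl (by omega))
    rw [hLap]
    have h0 : ¬ ((k0:ℕ) = 1) := by omega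
    by_cases hl : (l:ℕ) = 1 <;> simp [hl, h0, hD0, hv0']
  -- row 1 of N vanishes
  have hNr1 : ∀ r : Fin (2*n), N k1 r = 0 := by
    intro r
    rw [hNap, J_row_odd (fun m => L m r) k1 k0
      (by rw [k1v]; decide) (by rw [k0v, k1v])]
    exact hLr0 r
  -- column 0 of N vanishes
  have hNc0 : ∀ r : Fin (2*n), N r k0 = 0 := by
    intro r; rw [hNap]
    exact Finset.sum_eq_zero fun m _ => by rw [hLc0 m k0 k0v, mul_zero]
  -- row 0 of N
  have hNr0 : ∀ l : Fin (2*n), N k0 l = -(L k1 l) := by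
    intro l
    rw [hNap]
    exact J_row_even (fun m => L m l) k0 k1 (by rw [k0v]; decide) (by rw [k0v, k1v])
  -- column 1 of J vanishes off row 0
  have hJr1 : ∀ r : Fin (2*n), (r:ℕ) ≠ 0 → Jm n r k1 = 0 := by
    intro r hr
    have c1 : ¬ ((r:ℕ) = (k1:ℕ) + 1 ∧ Even (k1:ℕ)) := by
      rintro ⟨-, h2⟩; rw [k1v, Nat.even_iff] at h2; omega
    have c2 : ¬ ((k1:ℕ) = (r:ℕ) + 1 ∧ Even (r:ℕ)) := by
      rintro ⟨h1, -⟩; rw [k1v] at h1; omega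
    rw [Jm_apply, if_neg c1, if_neg c2]
  -- N = J*D on indices (k ≠ 0, l ≥ 2)
  have hNJD : ∀ k l : Fin (2*n), (k:ℕ) ≠ 0 → 2 ≤ (l:ℕ) → N k l = (Jm n * D) k l := by
    intro k l hk hl
    rw [hNap, Matrix.mul_apply]
    have hLl : ∀ m : Fin (2*n), L m l = (if (m:ℕ) = 1 then w₀ l else 0) + D m l := by
      intro m
      rw [hLap]
      have h1 : ¬ ((l:ℕ) = 1) := by omega
      by_cases hm : (m:ℕ) = 1 <;> simp [hm, h1]
    calc ∑ m, Jm n k m * L m l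
        = ∑ m, (Jm n k m * (if (m:ℕ) = 1 then w₀ l else 0) + Jm n k m * D m l) :=
          Finset.sum_congr rfl fun m _ => by rw [hLl, mul_add]
      _ = (∑ m, Jm n k m * (if (m:ℕ) = 1 then w₀ l else 0)) + ∑ m, Jm n k m * D m l :=
          Finset.sum_add_distrib
      _ = ∑ m, Jm n k m * D m l := by
          rw [fin_sum_single (fun m => Jm n k m * (if (m:ℕ) = 1 then w₀ l else 0)) k1
            (fun b hb => ?_)]
          · rw [hJr1 k hk, zero_mul, zero_add]
          · have : ¬ ((b:ℕ) = 1) := fun hc => hb (Fin.ext (by rw [hc, k1v]))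
            simp [this]
  -- (Dᵀ J) k l = -((J D) l k)
  have hDJ : ∀ k l : Fin (2*n), (Dᵀ * Jm n) k l = -((Jm n * D) l k) := by
    intro k l
    rw [Matrix.mul_apply, Matrix.mul_apply, ← Finset.sum_neg_distrib]
    exact Finset.sum_congr rfl fun m _ => by
      rw [Matrix.transpose_apply, Jm_skew m l]; ring
  have hQap : ∀ k l : Fin (2*n), Qm k l = (Dᵀ * Jm n) k l + (Jm n * D) k l := by
    intro k l; rw [hQdef]; rfl
  have hQN : ∀ k l : Fin (2*n), 2 ≤ (k:ℕ) → 2 ≤ (l:ℕ) → Qm k l = N k l - N l k := by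
    intro k l hk hl
    rw [hQap, hDJ, ← hNJD k l (by omega) hl, ← hNJD l k (by omega) hk]
    ring
  have hQrow01 : ∀ k l : Fin (2*n), (k:ℕ) < 2 → Qm k l = 0 := by
    intro k l hk
    have e1 : (Dᵀ * Jm n) k l = 0 := by
      rw [Matrix.mul_apply]
      exact Finset.sum_eq_zero fun m _ => by
        rw [Matrix.transpose_apply, hD m k (Or.inr hk), zero_mul]
    have e2 : (Jm n * D) k l = 0 := by
      rw [Matrix.mul_apply]
      rcases (by omega : (k:ℕ) = 0 ∨ (k:ℕ) = 1) with hk0 | hk1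
      · rw [J_row_even (fun m => D m l) k k1 (by rw [hk0]; decide) (by rw [k1v, hk0])]
        rw [hD k1 l (Or.inl (by omega)), neg_zero]
      · rw [J_row_odd (fun m => D m l) k k0 (by rw [hk1]; decide) (by rw [k0v, hk1])]
        exact hD k0 l (Or.inl (by omega))
    rw [hQap, e1, e2, add_zero]
  -- the key formula for dω
  have hdot0 : ∀ x : G n, x ⬝ᵥ (E n 0) = x k0 := fun x => dot_E x k0
  have hinn : ∀ u w : G n, inn u w = u ⬝ᵥ w := fun _ _ => rfl
  have keyA : ∀ x y z : G n, dOm L x y z =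
      -(x k0) * ((N *ᵥ y) ⬝ᵥ z - (N *ᵥ z) ⬝ᵥ y)
       + (y k0) * ((N *ᵥ x) ⬝ᵥ z - (N *ᵥ z) ⬝ᵥ x)
       - (z k0) * ((N *ᵥ x) ⬝ᵥ y - (N *ᵥ y) ⬝ᵥ x) := by
    intro x y z
    simp only [dOm, om, br, hinn, hdot0]
    simp only [Matrix.mulVec_sub, Matrix.mulVec_smul, sub_dotProduct,
      smul_dotProduct, smul_eq_mul, Matrix.mulVec_mulVec, ← hNdef]
    ring
  have hEE : ∀ a b : Fin (2*n), (N *ᵥ E n (a:ℕ)) ⬝ᵥ E n (b:ℕ) = N b a := by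
    intro a b
    rw [mulVec_E]
    exact dot_E _ b
  constructor
  · intro h
    have P : ∀ k l : Fin (2*n), (k:ℕ) ≠ 0 → (l:ℕ) ≠ 0 → N k l = N l k := by
      intro k l hk hl
      have h0 := h (E n 0) (E n (k:ℕ)) (E n (l:ℕ))
      rw [keyA] at h0
      have e0 : (E n 0) k0 = 1 := by
        show (if ((k0:ℕ) = 0) then (1:ℝ) else 0) = 1
        rw [if_pos k0v]
      have ek : (E n (k:ℕ)) k0 = 0 := by
        show (if ((k0:ℕ) = (k:ℕ)) then (1:ℝ) else 0) = 0
        rw [if_neg (by omega)]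
      have el : (E n (l:ℕ)) k0 = 0 := by
        show (if ((k0:ℕ) = (l:ℕ)) then (1:ℝ) else 0) = 0
        rw [if_neg (by omega)]
      rw [e0, ek, el, hEE k l, hEE l k] at h0
      have h0' : -(N l k - N k l) = 0 := by linarith [h0]
      linarith [h0']
    constructor
    · -- v₀ = 0
      have hJv : ∀ r : Fin (2*n), (r:ℕ) ≠ 0 → (∑ m, Jm n r m * v₀ m) = 0 := by
        intro r hr
        have hcol1 : ∀ m : Fin (2*n), L m k1 = (if (m:ℕ) = 1 then μ else 0) + v₀ m := by
          intro m
          have hd : D m k1 = 0 := hD m k1 (Or.inr (by omega))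
          rw [hLap]
          by_cases hm : (m:ℕ) = 1 <;> simp [hm, k1v, hd, hw1']
        have e1 : N r k1 = (∑ m, Jm n r m * (if (m:ℕ) = 1 then μ else 0))
            + ∑ m, Jm n r m * v₀ m := by
          rw [hNap, ← Finset.sum_add_distrib]
          exact Finset.sum_congr rfl fun m _ => by rw [hcol1, mul_add]
        have e2 : (∑ m, Jm n r m * (if (m:ℕ) = 1 then μ else 0)) = 0 := by
          rw [fin_sum_single (fun m => Jm n r m * (if (m:ℕ) = 1 then μ else 0)) k1
            (fun b hb => ?_)]
          · rw [hJr1 r hr, zero_mul]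
          · have : ¬ ((b:ℕ) = 1) := fun hc => hb (Fin.ext (by rw [hc, k1v]))
            simp [this]
        have e3 : N r k1 = 0 := by rw [P r k1 hr (by omega), hNr1]
        rw [e3, e2, zero_add] at e1
        linarith [e1]
      funext j
      show v₀ j = (0:ℝ)
      by_cases hj : (j:ℕ) < 2
      · exact hv j hj
      · rcases Nat.even_or_odd (j:ℕ) with he | ho
        · have hjlt : (j:ℕ) + 1 < 2*n := by
            rcases he with ⟨c, hc⟩; have := j.isLt; omega
          have hodd : ¬ Even (((⟨(j:ℕ)+1, hjlt⟩ : Fin (2*n)) : ℕ)) := by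
            show ¬ Even ((j:ℕ)+1)
            rcases he with ⟨c, hc⟩
            rw [Nat.even_iff]; omega
          have := hJv ⟨(j:ℕ)+1, hjlt⟩ (by simp)
          rw [J_row_odd v₀ ⟨(j:ℕ)+1, hjlt⟩ j hodd rfl] at this
          exact this
        · have hjlt : (j:ℕ) - 1 < 2*n := by have := j.isLt; omega
          have hev : Even (((⟨(j:ℕ)-1, hjlt⟩ : Fin (2*n)) : ℕ)) := by
            show Even ((j:ℕ)-1)
            rcases ho with ⟨c, hc⟩
            rw [Nat.even_iff]; omega
          have hne : ((⟨(j:ℕ)-1, hjlt⟩ : Fin (2*n)) : ℕ) ≠ 0 := by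
            show (j:ℕ) - 1 ≠ 0; omega
          have := hJv ⟨(j:ℕ)-1, hjlt⟩ hne
          rw [J_row_even v₀ ⟨(j:ℕ)-1, hjlt⟩ j hev (by show (j:ℕ) = (j:ℕ) - 1 + 1; omega)] at this
          linarith [this]
    · -- sp condition
      intro x hx
      rw [Matrix.mulVec_mulVec, Matrix.mulVec_mulVec, ← Matrix.add_mulVec, ← hQdef]
      funext i
      show ∑ l, Qm i l * x l = 0
      refine Finset.sum_eq_zero fun l _ => ?_
      by_cases hl : (l:ℕ) < 2
      · rw [hx l hl, mul_zero]
      · have hQ0 : Qm i l = 0 := by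
          by_cases hi : (i:ℕ) < 2
          · exact hQrow01 i l hi
          · rw [hQN i l (by omega) (by omega), P i l (by omega) (by omega), sub_self]
        rw [hQ0, zero_mul]
  · rintro ⟨hv0, hsp⟩
    have hNc1 : ∀ r : Fin (2*n), (r:ℕ) ≠ 0 → N r k1 = 0 := by
      intro r hr
      rw [hNap, fin_sum_single (fun m => Jm n r m * L m k1) k1 (fun b hb => ?_)]
      · rw [hJr1 r hr, zero_mul]
      · have hb1 : ¬ ((b:ℕ) = 1) := fun hc => hb (Fin.ext (by rw [hc, k1v]))
        have hd : D b k1 = 0 := hD b k1 (Or.inr (by omega))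
        have hLb : L b k1 = 0 := by
          rw [hLap]
          simp [hb1, k1v, hd, hv0]
        show Jm n r b * L b k1 = 0
        rw [hLb, mul_zero]
    have P : ∀ k l : Fin (2*n), (k:ℕ) ≠ 0 → (l:ℕ) ≠ 0 → N k l = N l k := by
      intro k l hk hl
      rcases eq_or_ne (k:ℕ) 1 with hk1 | hk1
      · have hkk : k = k1 := Fin.ext (by rw [hk1, k1v])
        subst hkk
        rw [hNr1, hNc1 l hl]
      · rcases eq_or_ne (l:ℕ) 1 with hl1 | hl1
        · have hll : l = k1 := Fin.ext (by rw [hl1, k1v])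
          subst hll
          rw [hNr1, hNc1 k hk]
        · have hEa : inA (E n (l:ℕ)) := by
            intro i hi
            show (if ((i:ℕ) = (l:ℕ)) then (1:ℝ) else 0) = 0
            rw [if_neg (by omega)]
          have h5 := hsp (E n (l:ℕ)) hEa
          rw [Matrix.mulVec_mulVec, Matrix.mulVec_mulVec, ← Matrix.add_mulVec, ← hQdef,
            mulVec_E] at h5
          have h6 := congrFun h5 k
          have h7 : Qm k l = 0 := h6
          rw [hQN k l (by omega) (by omega)] at h7
          linarith [h7]
    -- structure of N k l - N l k
    have hA : ∀ l k : Fin (2*n), N l k - N k l =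
        (if l = k0 then -(L k1 k) else if k = k0 then L k1 l else 0) := by
      intro l k
      by_cases hl : l = k0
      · subst hl
        rw [if_pos rfl, hNr0, hNc0]
        ring
      · rw [if_neg hl]
        by_cases hk : k = k0
        · subst hk
          rw [if_pos rfl, hNc0, hNr0]
          ring
        · have hl0 : (l:ℕ) ≠ 0 := fun hc => hl (Fin.ext (by rw [hc, k0v]))
          have hk0' : (k:ℕ) ≠ 0 := fun hc => hk (Fin.ext (by rw [hc, k0v]))
          rw [if_neg hk, P l k hl0 hk0', sub_self]
    have hL10 : L k1 k0 = 0 := hLc0 k1 k0 k0v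
    have hbeta : ∀ y z : G n, (N *ᵥ y) ⬝ᵥ z - (N *ᵥ z) ⬝ᵥ y
        = (y k0) * (∑ m, L k1 m * z m) - (z k0) * (∑ m, L k1 m * y m) := by
      intro y z
      have e1 : (N *ᵥ y) ⬝ᵥ z - (N *ᵥ z) ⬝ᵥ y
          = ∑ l, (∑ k, (N l k - N k l) * y k) * z l := by
        show (∑ l, (∑ k, N l k * y k) * z l) - (∑ k, (∑ l, N k l * z l) * y k) = _
        rw [show (∑ k, (∑ l, N k l * z l) * y k) = ∑ l, ∑ k, N k l * z l * y k by
          simp only [Finset.sum_mul]; exact Finset.sum_comm]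
        simp only [Finset.sum_mul]
        rw [← Finset.sum_sub_distrib]
        refine Finset.sum_congr rfl fun l _ => ?_
        rw [← Finset.sum_sub_distrib]
        exact Finset.sum_congr rfl fun k _ => by ring
      have e3 : ∀ l : Fin (2*n), (∑ k, (N l k - N k l) * y k)
          = y k0 * L k1 l + (if l = k0 then -(∑ m, L k1 m * y m) else 0) := by
        intro l
        by_cases hl : l = k0
        · subst hl
          rw [if_pos rfl]
          calc ∑ k, (N k0 k - N k k0) * y k
              = ∑ k, -(L k1 k * y k) :=
                Finset.sum_congr rfl fun k _ => by rw [hA k0 k, if_pos rfl]; ring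
            _ = -(∑ k, L k1 k * y k) := Finset.sum_neg_distrib _
            _ = y k0 * L k1 k0 + -(∑ k, L k1 k * y k) := by rw [hL10]; ring
        · rw [if_neg hl, add_zero]
          rw [fin_sum_single (fun k => (N l k - N k l) * y k) k0 (fun b hb => ?_)]
          · show (N l k0 - N k0 l) * y k0 = y k0 * L k1 l
            rw [hA l k0, if_neg hl, if_pos rfl]; ring
          · show (N l b - N b l) * y b = 0
            rw [hA l b, if_neg hl, if_neg hb, zero_mul]
      rw [e1]
      calc ∑ l, (∑ k, (N l k - N k l) * y k) * z l
          = ∑ l, (y k0 * (L k1 l * z l)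
              + (if l = k0 then -(∑ m, L k1 m * y m) * z l else 0)) := by
            refine Finset.sum_congr rfl fun l _ => ?_
            rw [e3]
            split_ifs <;> ring
        _ = (∑ l, y k0 * (L k1 l * z l))
              + ∑ l, (if l = k0 then -(∑ m, L k1 m * y m) * z l else 0) :=
            Finset.sum_add_distrib
        _ = y k0 * (∑ m, L k1 m * z m) - z k0 * (∑ m, L k1 m * y m) := by
            rw [← Finset.mul_sum,
              Finset.sum_ite_eq' Finset.univ k0 (fun l => -(∑ m, L k1 m * y m) * z l),
              if_pos (Finset.mem_univ k0)]
            ring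
    intro x y z
    rw [keyA, hbeta, hbeta, hbeta]
    ring
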